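/- Let M be a von Neumann algebra acting on a Hilbert space H, let Tr be a faithful normal semifinite trace on B(K)⊗̄M for a Hilbert space K, and let V, W : H' → K⊗H be isometries intertwining a fixed right M-module structure on H' with the diagonal right M-action on K⊗H (i.e. V and W are right M-module maps). Then W V* lies in B(K)⊗̄M and Tr(V V*) = Tr(W W*). -/
import Mathlib


open scoped ENNReal

/-- If `M` is a von Neumann algebra on `H`, `H'` is a right `M`-module (via the
*-anti-homomorphism `ρ`), `H₂` plays the role of `K ⊗ H` with the diagonal right `M`-action `ρ₂`,
`N` is the von Neumann algebra `B(K) ⊗̄ M`, realized as the commutant of the diagonal right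
action, `Tr` is a (faithful normal semifinite) trace on it, and `V, W : H' → H₂` are isometries
intertwining the right `M`-module structures, then `W V* ∈ N` and `Tr (V V*) = Tr (W W*)`. -/
theorem stmt0
    {H H' H₂ : Type}
    [NormedAddCommGroup H] [InnerProductSpace ℂ H] [CompleteSpace H]
    [NormedAddCommGroup H'] [InnerProductSpace ℂ H'] [CompleteSpace H']
    [NormedAddCommGroup H₂] [InnerProductSpace ℂ H₂] [CompleteSpace H₂]
    (M : VonNeumannAlgebra H)
    -- the right `M`-module structures, as *-anti-homomorphisms on `M`
    (ρ : (H →L[ℂ] H) → (H' →L[ℂ] H'))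
    (ρ₂ : (H →L[ℂ] H) → (H₂ →L[ℂ] H₂))
    (hρ_add : ∀ x ∈ M, ∀ y ∈ M, ρ (x + y) = ρ x + ρ y)
    (hρ_mul : ∀ x ∈ M, ∀ y ∈ M, ρ (x * y) = ρ y * ρ x)
    (hρ_star : ∀ x ∈ M, ρ (star x) = star (ρ x))
    (hρ_one : ρ 1 = 1)
    (hρ₂_add : ∀ x ∈ M, ∀ y ∈ M, ρ₂ (x + y) = ρ₂ x + ρ₂ y)
    (hρ₂_mul : ∀ x ∈ M, ∀ y ∈ M, ρ₂ (x * y) = ρ₂ y * ρ₂ x)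
    (hρ₂_star : ∀ x ∈ M, ρ₂ (star x) = star (ρ₂ x))
    (hρ₂_one : ρ₂ 1 = 1)
    -- `N = B(K) ⊗̄ M`, realized as the commutant of the diagonal right `M`-action on `K ⊗ H`
    (N : VonNeumannAlgebra H₂)
    (hN : ∀ x : H₂ →L[ℂ] H₂, x ∈ N ↔ ∀ m ∈ M, Commute x (ρ₂ m))
    -- a faithful normal semifinite trace on `N` (defined on all of `B(H₂)`, tracial)
    (Tr : (H₂ →L[ℂ] H₂) → ℝ≥0∞)
    (hTr_tracial : ∀ x : H₂ →L[ℂ] H₂, Tr (star x * x) = Tr (x * star x))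
    -- the isometries `V, W`, intertwining the right `M`-module structures
    (V W : H' →L[ℂ] H₂)
    (hV : Isometry V) (hW : Isometry W)
    (hVint : ∀ m ∈ M, V.comp (ρ m) = (ρ₂ m).comp V)
    (hWint : ∀ m ∈ M, W.comp (ρ m) = (ρ₂ m).comp W) :
    W.comp (ContinuousLinearMap.adjoint V) ∈ N ∧
      Tr (V.comp (ContinuousLinearMap.adjoint V)) =
        Tr (W.comp (ContinuousLinearMap.adjoint W)) := by

  have hVV : ContinuousLinearMap.adjoint V ∘L V = 1 :=
    (V.norm_map_iff_adjoint_comp_self).mp (fun x => hV.norm_map_of_map_zero (map_zero V) x)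
  have hWW : ContinuousLinearMap.adjoint W ∘L W = 1 :=
    (W.norm_map_iff_adjoint_comp_self).mp (fun x => hW.norm_map_of_map_zero (map_zero W) x)
  -- adjoint intertwining: V* ∘ ρ₂ m = ρ m ∘ V*
  have hVadj : ∀ m ∈ M, (ContinuousLinearMap.adjoint V) ∘L (ρ₂ m) =
      (ρ m) ∘L (ContinuousLinearMap.adjoint V) := by
    intro m hm
    have hsm : star m ∈ M := star_mem hm
    have := congrArg ContinuousLinearMap.adjoint (hVint (star m) hsm)
    rw [ContinuousLinearMap.adjoint_comp, ContinuousLinearMap.adjoint_comp] at this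
    rw [hρ_star m hm, hρ₂_star m hm, ← ContinuousLinearMap.star_eq_adjoint,
      ← ContinuousLinearMap.star_eq_adjoint, star_star, star_star] at this
    exact this.symm
  have hA : ∀ m ∈ M, Commute (W ∘L ContinuousLinearMap.adjoint V) (ρ₂ m) := by
    intro m hm
    show (W ∘L ContinuousLinearMap.adjoint V) * ρ₂ m = ρ₂ m * (W ∘L ContinuousLinearMap.adjoint V)
    calc (W ∘L ContinuousLinearMap.adjoint V) * ρ₂ m
        = W ∘L ((ContinuousLinearMap.adjoint V) ∘L ρ₂ m) := by
          rw [ContinuousLinearMap.mul_def, ContinuousLinearMap.comp_assoc]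
      _ = (W ∘L ρ m) ∘L ContinuousLinearMap.adjoint V := by
          rw [hVadj m hm, ContinuousLinearMap.comp_assoc]
      _ = ρ₂ m * (W ∘L ContinuousLinearMap.adjoint V) := by
          rw [hWint m hm, ContinuousLinearMap.mul_def, ContinuousLinearMap.comp_assoc]
  refine ⟨(hN _).mpr hA, ?_⟩
  have key := hTr_tracial (W ∘L ContinuousLinearMap.adjoint V)
  have hstar : star (W ∘L ContinuousLinearMap.adjoint V) = V ∘L ContinuousLinearMap.adjoint W := by
    rw [ContinuousLinearMap.star_eq_adjoint, ContinuousLinearMap.adjoint_comp,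
      ContinuousLinearMap.adjoint_adjoint]
  rw [hstar] at key
  have h1 : (V ∘L ContinuousLinearMap.adjoint W) * (W ∘L ContinuousLinearMap.adjoint V) =
      V ∘L ContinuousLinearMap.adjoint V := by
    rw [ContinuousLinearMap.mul_def, ContinuousLinearMap.comp_assoc,
      ← ContinuousLinearMap.comp_assoc (ContinuousLinearMap.adjoint W) W, hWW,
      ContinuousLinearMap.one_def, ContinuousLinearMap.id_comp]
  have h2 : (W ∘L ContinuousLinearMap.adjoint V) * (V ∘L ContinuousLinearMap.adjoint W) =
      W ∘L ContinuousLinearMap.adjoint W := by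
    rw [ContinuousLinearMap.mul_def, ContinuousLinearMap.comp_assoc,
      ← ContinuousLinearMap.comp_assoc (ContinuousLinearMap.adjoint V) V, hVV,
      ContinuousLinearMap.one_def, ContinuousLinearMap.id_comp]
  rw [h1, h2] at key
  exact key
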